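/- Every housing market with strict preferences has a core matching: there exists a permutation σ of Fin N that no nonempty coalition blocks. -/

import Mathlib

/-- A nonempty coalition `S` blocks the matching `σ` in the housing market with
utility matrix `U`: the coalition can redistribute its own endowed houses via `τ`
(mapping `S` into `S`, injectively on `S`) so that every member is strictly better off. -/
def Blocks {N : ℕ} (U : Fin N → Fin N → ℝ) (σ : Fin N → Fin N) (S : Set (Fin N)) : Prop :=
  S.Nonempty ∧ ∃ τ : Fin N → Fin N, Set.MapsTo τ S S ∧ Set.InjOn τ S ∧
    ∀ i ∈ S, U i (σ i) < U i (τ i)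

/-- A matching is a core matching if no nonempty coalition blocks it. -/
def IsCoreMatching {N : ℕ} (U : Fin N → Fin N → ℝ) (σ : Fin N → Fin N) : Prop :=
  ∀ S : Set (Fin N), ¬ Blocks U σ S

/-- Every self-map of a finite type that preserves a nonempty finite set `A`
has a cycle inside `A`: a nonempty subset `C ⊆ A` on which `f` is a bijection. -/
lemma exists_cycle {α : Type*} [Finite α] (f : α → α) (A : Finset α)
    (hf : ∀ i ∈ A, f i ∈ A) (hA : A.Nonempty) :
    ∃ C : Set α, C.Nonempty ∧ C ⊆ ↑A ∧ Set.MapsTo f C C ∧ Set.InjOn f C ∧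
      Set.SurjOn f C C := by
  obtain ⟨i, hi⟩ := hA
  have hiter : ∀ k, f^[k] i ∈ A := by
    intro k
    induction k with
    | zero => simpa using hi
    | succ k ih =>
        rw [Function.iterate_succ_apply']
        exact hf _ ih
  obtain ⟨a, b, hab, heq⟩ := Finite.exists_ne_map_eq_of_infinite (fun k : ℕ => f^[k] i)
  -- WLOG a < b
  wlog hlt : a < b generalizing a b
  · exact this b a hab.symm heq.symm (by omega)
  set n := b - a with hn
  have hn1 : 1 ≤ n := by omega
  set y := f^[a] i with hy
  have hyper : f^[n] y = y := by
    have : f^[n] (f^[a] i) = f^[n + a] i := (Function.iterate_add_apply f n a i).symm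
    simp only [hy, this]
    have : n + a = b := by omega
    rw [this]
    exact heq.symm
  refine ⟨Set.range (fun k : ℕ => f^[k] y), ⟨y, 0, rfl⟩, ?_, ?_, ?_, ?_⟩
  · rintro z ⟨k, rfl⟩
    simp only [hy, ← Function.iterate_add_apply]
    exact hiter _
  · rintro z ⟨k, rfl⟩
    exact ⟨k + 1, by
      show f^[k + 1] y = f (f^[k] y)
      rw [Function.iterate_succ_apply']⟩
  · -- injectivity via the left inverse f^[n-1]
    have key : ∀ k : ℕ, f^[n - 1] (f (f^[k] y)) = f^[k] y := by
      intro k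
      have h1 : f (f^[k] y) = f^[k + 1] y := by
        rw [add_comm, Function.iterate_add_apply]; simp
      rw [h1, ← Function.iterate_add_apply]
      have h2 : n - 1 + (k + 1) = k + n := by omega
      rw [h2, Function.iterate_add_apply, hyper]
    rintro z1 ⟨k1, rfl⟩ z2 ⟨k2, rfl⟩ hz
    have := key k1
    rw [hz, key k2] at this
    exact this.symm
  · rintro z ⟨k, rfl⟩
    refine ⟨f^[n - 1] (f^[k] y), ⟨n - 1 + k, by
      show f^[n - 1 + k] y = f^[n - 1] (f^[k] y)
      rw [Function.iterate_add_apply]⟩, ?_⟩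
    show f (f^[n - 1] (f^[k] y)) = f^[k] y
    rw [← Function.iterate_succ_apply' f (n - 1) (f^[k] y), ← Function.iterate_add_apply]
    have h2 : (n - 1).succ + k = k + n := by omega
    rw [h2, Function.iterate_add_apply, hyper]

/-- The top-trading-cycles induction: for every finite set `A` of players there is a
map that is a bijection of `A` onto itself and is not blocked by any coalition inside `A`. -/
lemma ttc_aux {N : ℕ} (U : Fin N → Fin N → ℝ) (A : Finset (Fin N)) :
    ∃ σ : Fin N → Fin N, Set.MapsTo σ A A ∧ Set.InjOn σ A ∧ Set.SurjOn σ (↑A) ↑A ∧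
      ∀ S : Set (Fin N), S ⊆ ↑A → ¬ Blocks U σ S := by
  classical
  induction A using Finset.strongInductionOn with
  | _ A IH =>
    rcases A.eq_empty_or_nonempty with rfl | hA
    · refine ⟨id, by simp [Set.MapsTo], ?_, by simp [Set.SurjOn], ?_⟩
      · intro x hx; simp at hx
      · intro S hS hB
        obtain ⟨⟨x, hx⟩, _⟩ := hB
        simpa using hS hx
    · -- the "point to your favorite house in A" map
      have hmax : ∀ i : Fin N, ∃ x ∈ A, ∀ x' ∈ A, U i x' ≤ U i x := fun i =>
        A.exists_max_image (U i) hA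
      set f : Fin N → Fin N := fun i => (hmax i).choose with hf
      have hfA : ∀ i, f i ∈ A := fun i => (hmax i).choose_spec.1
      have hfmax : ∀ i, ∀ x' ∈ A, U i x' ≤ U i (f i) := fun i => (hmax i).choose_spec.2
      obtain ⟨C, hCne, hCA, hCmaps, hCinj, hCsurj⟩ :=
        exists_cycle f A (fun i _ => hfA i) hA
      set B : Finset (Fin N) := A.filter (fun i => i ∉ C) with hB
      have hBA : B ⊆ A := Finset.filter_subset _ _
      have hBssub : B ⊂ A := by
        obtain ⟨y, hyC⟩ := hCne
        refine Finset.ssubset_iff_of_subset hBA |>.mpr ⟨y, hCA hyC, ?_⟩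
        simp [hB, hyC, hCA hyC]
      obtain ⟨σ', hmaps', hinj', hsurj', hblock'⟩ := IH B hBssub
      have hBmem : ∀ i : Fin N, i ∈ B ↔ i ∈ A ∧ i ∉ C := by
        intro i; simp [hB]
      refine ⟨fun i => if i ∈ C then f i else σ' i, ?_, ?_, ?_, ?_⟩
      · intro i hi
        by_cases hiC : i ∈ C
        · simpa [hiC] using hCA (hCmaps hiC)
        · have : i ∈ B := (hBmem i).mpr ⟨hi, hiC⟩
          simpa [hiC] using hBA (hmaps' this)
      · intro i hi j hj hij
        by_cases hiC : i ∈ C <;> by_cases hjC : j ∈ C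
        · simp only [hiC, hjC, if_pos] at hij
          exact hCinj hiC hjC hij
        · exfalso
          have hjB : j ∈ B := (hBmem j).mpr ⟨hj, hjC⟩
          have h1 : f i ∈ C := hCmaps hiC
          have h2 : σ' j ∈ B := hmaps' hjB
          simp only [hiC, hjC, if_pos, if_neg, not_false_iff] at hij
          rw [← hij] at h2
          exact ((hBmem _).mp h2).2 h1
        · exfalso
          have hiB : i ∈ B := (hBmem i).mpr ⟨hi, hiC⟩
          have h1 : f j ∈ C := hCmaps hjC
          have h2 : σ' i ∈ B := hmaps' hiB
          simp only [hiC, hjC, if_pos, if_neg, not_false_iff] at hij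
          rw [hij] at h2
          exact ((hBmem _).mp h2).2 h1
        · simp only [hiC, hjC, if_neg, not_false_iff] at hij
          exact hinj' ((hBmem i).mpr ⟨hi, hiC⟩) ((hBmem j).mpr ⟨hj, hjC⟩) hij
      · intro j hj
        by_cases hjC : j ∈ C
        · obtain ⟨z, hzC, hzj⟩ := hCsurj hjC
          exact ⟨z, hCA hzC, by simp [hzC, hzj]⟩
        · have hjB : j ∈ B := (hBmem j).mpr ⟨hj, hjC⟩
          obtain ⟨z, hzB, hzj⟩ := hsurj' hjB
          have hzB' : z ∈ B := hzB
          have hz := (hBmem z).mp hzB'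
          exact ⟨z, hz.1, by simp [hz.2, hzj]⟩
      · intro S hS hBl
        obtain ⟨hSne, τ, hτmaps, hτinj, hτimp⟩ := hBl
        by_cases hSC : ∃ i ∈ S, i ∈ C
        · obtain ⟨i, hiS, hiC⟩ := hSC
          have h1 := hτimp i hiS
          simp only [hiC, if_pos] at h1
          have h2 : τ i ∈ A := hS (hτmaps hiS)
          exact absurd (hfmax i (τ i) h2) (not_le.mpr h1)
        · push_neg at hSC
          refine hblock' S ?_ ⟨hSne, τ, hτmaps, hτinj, ?_⟩
          · intro x hx
            exact (hBmem x).mpr ⟨hS hx, hSC x hx⟩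
          · intro i hi
            have := hτimp i hi
            simpa [hSC i hi] using this

/-- Every housing market with strict preferences has a core matching. -/
theorem core_matching_exists {N : ℕ} (hN : 1 ≤ N)
    (U : Fin N → Fin N → ℝ) (hU : ∀ i, Function.Injective (U i)) :
    ∃ σ : Equiv.Perm (Fin N), IsCoreMatching U ⇑σ := by
  obtain ⟨σ, _, hinj, _, hblock⟩ := ttc_aux U (Finset.univ : Finset (Fin N))
  have hinj' : Function.Injective σ :=
    Set.injOn_univ.mp (by simpa using hinj)
  have hbij : Function.Bijective σ := Finite.injective_iff_bijective.mp hinj'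
  refine ⟨Equiv.ofBijective σ hbij, ?_⟩
  intro S hBl
  exact hblock S (by simp) hBl
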